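/- Let f : ℝⁿ → ℝ be differentiable with gradient ∇f Lipschitz continuous with constant L ≥ 0, and let h : ℝⁿ → ℝ ∪ {+∞} be proper, lower semicontinuous, and bounded below. Let x ∈ ℝⁿ with h(x) < +∞, let ν > 0 satisfy νL < 1, and let x⁺ be a global minimizer over u ∈ ℝⁿ of (1/2)‖u − (x − ν∇f(x))‖₂² + ν h(u). Then f(x⁺) + h(x⁺) ≤ f(x) + h(x) − (1/2)(ν⁻¹ − L)‖x⁺ − x‖₂². -/

import Mathlib

open InnerProductSpace

lemma descent_lemma {n : ℕ}
    (f : EuclideanSpace ℝ (Fin n) → ℝ)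
    (f' : EuclideanSpace ℝ (Fin n) → EuclideanSpace ℝ (Fin n))
    (hf : ∀ y, HasGradientAt f (f' y) y)
    (L : ℝ)
    (hlip : ∀ y z, ‖f' y - f' z‖ ≤ L * ‖y - z‖)
    (x d : EuclideanSpace ℝ (Fin n)) :
    f (x + d) ≤ f x + ⟪f' x, d⟫_ℝ + L / 2 * ‖d‖ ^ 2 := by
  set φ : ℝ → ℝ := fun t => f (x + t • d) - t * ⟪f' x, d⟫_ℝ - L / 2 * t ^ 2 * ‖d‖ ^ 2 with hφdef
  have hφ : ∀ t : ℝ, HasDerivAt φ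
      (⟪f' (x + t • d), d⟫_ℝ - ⟪f' x, d⟫_ℝ - L * t * ‖d‖ ^ 2) t := by
    intro t
    have h1 : HasDerivAt (fun t : ℝ => x + t • d) d t := by
      simpa using ((hasDerivAt_id t).smul_const d).const_add x
    have h2 : HasDerivAt (fun t : ℝ => f (x + t • d)) (⟪f' (x + t • d), d⟫_ℝ) t := by
      have := (hf (x + t • d)).hasFDerivAt.comp_hasDerivAt t h1
      exact this
    have h3 : HasDerivAt (fun t : ℝ => t * ⟪f' x, d⟫_ℝ) (⟪f' x, d⟫_ℝ) t := by
      simpa using (hasDerivAt_id t).mul_const (⟪f' x, d⟫_ℝ)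
    have h4 : HasDerivAt (fun t : ℝ => L / 2 * t ^ 2 * ‖d‖ ^ 2) (L * t * ‖d‖ ^ 2) t := by
      have := ((hasDerivAt_pow 2 t).const_mul (L / 2)).mul_const (‖d‖ ^ 2)
      refine this.congr_deriv ?_
      ring
    exact (h2.sub h3).sub h4
  have hderiv_nonpos : ∀ t ∈ Set.Ici (0:ℝ),
      ⟪f' (x + t • d), d⟫_ℝ - ⟪f' x, d⟫_ℝ - L * t * ‖d‖ ^ 2 ≤ 0 := by
    intro t ht
    have h1 : ⟪f' (x + t • d) - f' x, d⟫_ℝ ≤ ‖f' (x + t • d) - f' x‖ * ‖d‖ :=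
      real_inner_le_norm _ _
    have h2 : ‖f' (x + t • d) - f' x‖ ≤ L * (t * ‖d‖) := by
      have := hlip (x + t • d) x
      simpa [norm_smul, abs_of_nonneg (Set.mem_Ici.mp ht), mul_assoc] using this
    have h3 : ‖f' (x + t • d) - f' x‖ * ‖d‖ ≤ L * (t * ‖d‖) * ‖d‖ :=
      mul_le_mul_of_nonneg_right h2 (norm_nonneg d)
    have h4 : ⟪f' (x + t • d) - f' x, d⟫_ℝ = ⟪f' (x + t • d), d⟫_ℝ - ⟪f' x, d⟫_ℝ :=
      inner_sub_left _ _ _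
    nlinarith [h1, h3, h4]
  have hanti : AntitoneOn φ (Set.Ici (0:ℝ)) := by
    apply antitoneOn_of_deriv_nonpos (convex_Ici 0)
    · exact (Differentiable.continuous (fun t => (hφ t).differentiableAt)).continuousOn
    · intro t _; exact (hφ t).differentiableAt.differentiableWithinAt
    · intro t ht
      rw [(hφ t).deriv]
      exact hderiv_nonpos t (Set.mem_of_mem_of_subset ht interior_subset)
  have := hanti (Set.self_mem_Ici) (Set.mem_Ici.mpr zero_le_one) zero_le_one
  simp only [hφdef] at this
  simp only [zero_smul, add_zero, one_smul, zero_mul, sub_zero, mul_zero, one_pow, ne_eq,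
    zero_pow, one_mul] at this
  linarith



/-- Descent property of one proximal gradient step (Lemma 2.3 / Bolte-Sabach-Teboulle). -/
theorem prox_gradient_descent {n : ℕ}
    (f : EuclideanSpace ℝ (Fin n) → ℝ)
    (f' : EuclideanSpace ℝ (Fin n) → EuclideanSpace ℝ (Fin n))
    (hf : ∀ y, HasGradientAt f (f' y) y)
    (L : ℝ) (hL : 0 ≤ L)
    (hlip : ∀ y z, ‖f' y - f' z‖ ≤ L * ‖y - z‖)
    (h : EuclideanSpace ℝ (Fin n) → EReal)
    (hproper : ∃ u, h u ≠ ⊤)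
    (hnobot : ∀ u, h u ≠ ⊥)
    (hlsc : LowerSemicontinuous h)
    (hbdd : ∃ c : ℝ, ∀ u, (c : EReal) ≤ h u)
    (x : EuclideanSpace ℝ (Fin n)) (hx : h x < ⊤)
    (ν : ℝ) (hν : 0 < ν) (hνL : ν * L < 1)
    (xp : EuclideanSpace ℝ (Fin n))
    (hxp : ∀ u, (((1 / 2) * ‖xp - (x - ν • f' x)‖ ^ 2 : ℝ) : EReal) + (ν : EReal) * h xp
        ≤ (((1 / 2) * ‖u - (x - ν • f' x)‖ ^ 2 : ℝ) : EReal) + (ν : EReal) * h u) :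
    (f xp : EReal) + h xp
      ≤ (f x : EReal) + h x - (((1 / 2) * (ν⁻¹ - L) * ‖xp - x‖ ^ 2 : ℝ) : EReal) := by
  set a := (h x).toReal with ha_def
  have hax : h x = (a : EReal) := (EReal.coe_toReal hx.ne (hnobot x)).symm
  -- h xp is finite
  have hxpx := hxp x
  rw [hax] at hxpx
  have hxp_ne_top : h xp ≠ ⊤ := by
    intro htop
    rw [htop] at hxpx
    have : (ν : EReal) * ⊤ = ⊤ := by
      rw [EReal.mul_top_of_pos]; exact_mod_cast hν
    rw [this] at hxpx
    have h2 : ((ν : EReal)) * (a : EReal) = ((ν * a : ℝ) : EReal) := by norm_cast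
    rw [h2] at hxpx
    have htop2 : (((1 / 2) * ‖xp - (x - ν • f' x)‖ ^ 2 : ℝ) : EReal) + ⊤ = ⊤ := by
      norm_cast
    rw [htop2, top_le_iff] at hxpx
    have : (((1 / 2) * ‖x - (x - ν • f' x)‖ ^ 2 : ℝ) : EReal) + ((ν * a : ℝ) : EReal)
        = (((1 / 2) * ‖x - (x - ν • f' x)‖ ^ 2 + ν * a : ℝ) : EReal) := by norm_cast
    rw [this] at hxpx
    exact EReal.coe_ne_top _ hxpx
  set b := (h xp).toReal with hb_def
  have haxp : h xp = (b : EReal) := (EReal.coe_toReal hxp_ne_top (hnobot xp)).symm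
  rw [haxp] at hxpx
  -- get real inequality
  have hreal : (1 / 2) * ‖xp - (x - ν • f' x)‖ ^ 2 + ν * b
      ≤ (1 / 2) * ‖x - (x - ν • f' x)‖ ^ 2 + ν * a := by
    have := hxpx
    norm_cast at this
  -- expand norms
  set g := f' x with hg
  set d := xp - x with hd
  have e1 : xp - (x - ν • g) = d + ν • g := by
    simp [hd]; abel
  have e2 : x - (x - ν • g) = ν • g := by abel
  have e3 : ‖d + ν • g‖ ^ 2 = ‖d‖ ^ 2 + 2 * ⟪d, ν • g⟫_ℝ + ‖ν • g‖ ^ 2 :=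
    norm_add_sq_real _ _
  have e4 : ⟪d, ν • g⟫_ℝ = ν * ⟪d, g⟫_ℝ := real_inner_smul_right _ _ _
  rw [e1, e2, e3, e4] at hreal
  -- b ≤ a - ⟪d,g⟫ - 1/(2ν) ‖d‖²
  have key : ν * b ≤ ν * a - ν * ⟪d, g⟫_ℝ - (1 / 2) * ‖d‖ ^ 2 := by linarith
  -- descent lemma
  have hdesc : f (x + d) ≤ f x + ⟪g, d⟫_ℝ + L / 2 * ‖d‖ ^ 2 :=
    descent_lemma f f' hf L hlip x d
  have hxd : x + d = xp := by simp [hd]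
  rw [hxd] at hdesc
  have hinner : ⟪g, d⟫_ℝ = ⟪d, g⟫_ℝ := real_inner_comm _ _
  rw [hinner] at hdesc
  -- combine
  have hb_le : b ≤ a - ⟪d, g⟫_ℝ - (1 / (2 * ν)) * ‖d‖ ^ 2 := by
    have h6 : ν * (a - ⟪d, g⟫_ℝ - (1 / (2 * ν)) * ‖d‖ ^ 2)
        = ν * a - ν * ⟪d, g⟫_ℝ - (1 / 2) * ‖d‖ ^ 2 := by
      field_simp
    have h7 : ν * b ≤ ν * (a - ⟪d, g⟫_ℝ - (1 / (2 * ν)) * ‖d‖ ^ 2) := by linarith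
    exact le_of_mul_le_mul_left h7 hν
  have final : f xp + b ≤ f x + a - (1 / 2) * (ν⁻¹ - L) * ‖d‖ ^ 2 := by
    have h5 : (1 / 2) * (ν⁻¹ - L) * ‖d‖ ^ 2 = (1 / (2 * ν)) * ‖d‖ ^ 2 - L / 2 * ‖d‖ ^ 2 := by
      field_simp
    linarith
  rw [hax, haxp]
  have : ((f x : EReal) + (a : EReal) - (((1 / 2) * (ν⁻¹ - L) * ‖xp - x‖ ^ 2 : ℝ) : EReal))
      = ((f x + a - (1 / 2) * (ν⁻¹ - L) * ‖xp - x‖ ^ 2 : ℝ) : EReal) := by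
    norm_cast
  rw [this]
  norm_cast
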